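/- Let G be a topological group, d a positive integer, ρ : G → U(M_d) a unitary representation, and α^ρ the quasifree action of G on the extended Cuntz algebra E_d. Let (G, C, γ) be a unital G-C*-algebra and φ : E_d → C a unital *-homomorphism such that φ∘μ₀ is equivariant, where μ₀ : M_d ⊕ ℂ → E_d is the canonical embedding. For g ∈ G define w(g) = φ(α^ρ_g(r₁))* γ_g(φ(r₁)). Then: (1) w is a continuous map from G to the unitary group U(C); (2) φ(α^ρ_g(r_j)) w(g) = γ_g(φ(r_j)) for all j = 1,…,d; (3) w(gh) = w(g) γ_g(w(h)) for all g, h ∈ G; and (4) ‖w(g) - 1‖ = ‖φ(α^ρ_g(r₁)) - γ_g(φ(r₁))‖ for all g ∈ G. -/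

import Mathlib

open scoped BigOperators

set_option maxHeartbeats 1000000

section Aux
variable {E : Type*} [NormedRing E] [StarRing E] [CStarRing E] [CompleteSpace E]
    [NormedAlgebra ℂ E] [StarModule ℂ E] {d : ℕ} (r : Fin d → E)

theorem aux_rr (hiso : ∀ j, star (r j) * r j = 1)
    (horth : ∀ j k, j ≠ k → (r j * star (r j)) * (r k * star (r k)) = 0)
    (j k : Fin d) : star (r j) * r k = if j = k then (1:E) else 0 := by
  rcases eq_or_ne j k with h | h
  · subst h; simp [hiso j]
  · have h0 := horth j k h
    have key : star (r j) * ((r j * star (r j)) * (r k * star (r k))) * r k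
        = star (r j) * r k := by
      have e1 : star (r j) * ((r j * star (r j)) * (r k * star (r k))) * r k
          = (star (r j) * r j) * ((star (r j) * r k) * (star (r k) * r k)) := by
        simp only [mul_assoc]
      rw [e1, hiso j, hiso k, one_mul, mul_one]
    rw [h0] at key
    simp only [mul_zero, zero_mul] at key
    simp [h, ← key]

/-- the matrix part of μ₀ -/
noncomputable def Apart (x : Matrix (Fin d) (Fin d) ℂ) : E :=
  ∑ j, ∑ k, x j k • (r j * star (r k))

theorem Apart_pair (x : Matrix (Fin d) (Fin d) ℂ) :
    Apart r x = ∑ p : Fin d × Fin d, x p.1 p.2 • (r p.1 * star (r p.2)) := by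
  rw [Fintype.sum_prod_type]; rfl

theorem aux_A_mul_A (hiso : ∀ j, star (r j) * r j = 1)
    (horth : ∀ j k, j ≠ k → (r j * star (r j)) * (r k * star (r k)) = 0)
    (x y : Matrix (Fin d) (Fin d) ℂ) :
    Apart r x * Apart r y = Apart r (x * y) := by
  have hrr := aux_rr r hiso horth
  have step : ∀ j k p q : Fin d,
      (x j k • (r j * star (r k))) * (y p q • (r p * star (r q)))
      = if k = p then (x j k * y p q) • (r j * star (r q)) else 0 := by
    intro j k p q
    rw [smul_mul_assoc, mul_smul_comm, smul_smul]
    rcases eq_or_ne k p with h | h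
    · subst h
      have : (r j * star (r k)) * (r k * star (r q)) = r j * star (r q) := by
        have e : (r j * star (r k)) * (r k * star (r q))
            = r j * ((star (r k) * r k) * star (r q)) := by simp only [mul_assoc]
        rw [e, hiso k, one_mul]
      rw [this]; simp
    · have : (r j * star (r k)) * (r p * star (r q)) = 0 := by
        have e : (r j * star (r k)) * (r p * star (r q))
            = r j * ((star (r k) * r p) * star (r q)) := by simp only [mul_assoc]
        rw [e, hrr k p, if_neg h, zero_mul, mul_zero]
      rw [this]; simp [h]
  rw [Apart_pair r x, Apart_pair r y, Finset.sum_mul_sum]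
  have e2 : ∀ a : Fin d × Fin d,
      (∑ b : Fin d × Fin d, (x a.1 a.2 • (r a.1 * star (r a.2))) * (y b.1 b.2 • (r b.1 * star (r b.2))))
      = ∑ q, (x a.1 a.2 * y a.2 q) • (r a.1 * star (r q)) := by
    intro a
    rw [Fintype.sum_prod_type]
    calc (∑ p, ∑ q, (x a.1 a.2 • (r a.1 * star (r a.2))) * (y p q • (r p * star (r q))))
        = ∑ p, ∑ q, (if a.2 = p then (x a.1 a.2 * y p q) • (r a.1 * star (r q)) else 0) := by
          simp only [step]
      _ = ∑ p, (if a.2 = p then ∑ q, (x a.1 a.2 * y p q) • (r a.1 * star (r q)) else 0) := by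
          refine Finset.sum_congr rfl fun p _ => ?_
          split_ifs <;> simp
      _ = ∑ q, (x a.1 a.2 * y a.2 q) • (r a.1 * star (r q)) := by
          rw [Finset.sum_ite_eq]; simp
  rw [Finset.sum_congr rfl fun a _ => e2 a]
  rw [Fintype.sum_prod_type]
  unfold Apart
  refine Finset.sum_congr rfl fun j _ => ?_
  rw [Finset.sum_comm]
  refine Finset.sum_congr rfl fun q _ => ?_
  rw [Matrix.mul_apply, Finset.sum_smul]

theorem aux_rk_S (hiso : ∀ j, star (r j) * r j = 1)
    (horth : ∀ j k, j ≠ k → (r j * star (r j)) * (r k * star (r k)) = 0)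
    (k : Fin d) : star (r k) * (∑ j, r j * star (r j)) = star (r k) := by
  have hrr := aux_rr r hiso horth
  rw [Finset.mul_sum]
  have : ∀ p : Fin d, star (r k) * (r p * star (r p))
      = if k = p then star (r p) else 0 := by
    intro p
    rw [← mul_assoc, hrr k p]
    split_ifs <;> simp
  simp only [this, Finset.sum_ite_eq]
  simp

theorem aux_S_rk (hiso : ∀ j, star (r j) * r j = 1)
    (horth : ∀ j k, j ≠ k → (r j * star (r j)) * (r k * star (r k)) = 0)
    (k : Fin d) : (∑ j, r j * star (r j)) * r k = r k := by
  have hrr := aux_rr r hiso horth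
  rw [Finset.sum_mul]
  have : ∀ p : Fin d, (r p * star (r p)) * r k = if p = k then r p else 0 := by
    intro p
    rw [mul_assoc, hrr p k]
    split_ifs <;> simp
  simp only [this, Finset.sum_ite_eq']
  simp

theorem aux_A_one : Apart r (1 : Matrix (Fin d) (Fin d) ℂ) = ∑ j, r j * star (r j) := by
  unfold Apart
  simp [Matrix.one_apply, ite_smul, Finset.sum_ite_eq]

theorem aux_A_Q (hiso : ∀ j, star (r j) * r j = 1)
    (horth : ∀ j k, j ≠ k → (r j * star (r j)) * (r k * star (r k)) = 0)
    (x : Matrix (Fin d) (Fin d) ℂ) :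
    Apart r x * (1 - ∑ j, r j * star (r j)) = 0 := by
  unfold Apart
  rw [Finset.sum_mul]
  refine Finset.sum_eq_zero fun j _ => ?_
  rw [Finset.sum_mul]
  refine Finset.sum_eq_zero fun k _ => ?_
  rw [smul_mul_assoc, mul_sub, mul_one, mul_assoc, aux_rk_S r hiso horth k]
  simp

theorem aux_Q_A (hiso : ∀ j, star (r j) * r j = 1)
    (horth : ∀ j k, j ≠ k → (r j * star (r j)) * (r k * star (r k)) = 0)
    (x : Matrix (Fin d) (Fin d) ℂ) :
    (1 - ∑ j, r j * star (r j)) * Apart r x = 0 := by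
  unfold Apart
  rw [Finset.mul_sum]
  refine Finset.sum_eq_zero fun j _ => ?_
  rw [Finset.mul_sum]
  refine Finset.sum_eq_zero fun k _ => ?_
  rw [mul_smul_comm, sub_mul, one_mul, ← mul_assoc, aux_S_rk r hiso horth j]
  simp

theorem aux_star_A (x : Matrix (Fin d) (Fin d) ℂ) :
    star (Apart r x) = Apart r (star x) := by
  unfold Apart
  rw [star_sum]
  rw [Finset.sum_comm]
  refine Finset.sum_congr rfl fun k _ => ?_
  rw [star_sum]
  refine Finset.sum_congr rfl fun j _ => ?_
  rw [star_smul, star_mul, star_star, Matrix.star_apply]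

theorem aux_A_std (j k : Fin d) :
    Apart r (Matrix.single j k 1) = r j * star (r k) := by
  unfold Apart
  have : ∀ p q : Fin d, Matrix.single j k (1:ℂ) p q • (r p * star (r q))
      = if j = p then (if k = q then r p * star (r q) else 0) else 0 := by
    intro p q
    rw [Matrix.single]
    simp only [Matrix.of_apply]
    split_ifs with h1 h2 <;> simp_all
  simp only [this]
  have h2 : ∀ p, (∑ q, if j = p then if k = q then r p * star (r q) else 0 else 0)
      = if j = p then r p * star (r k) else 0 := by
    intro p
    split_ifs with h
    · rw [Finset.sum_ite_eq]; simp
    · simp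
  simp only [h2]
  rw [Finset.sum_ite_eq]
  simp

end Aux


/-- Lemma 3.7(1)-(4) of the paper, on the cocycle `w(g) = φ(α^ρ_g(r₁))* γ_g(φ(r₁))`
associated to a unital homomorphism `φ : E_d → C` such that `φ∘μ₀` is equivariant.
Here `E_d` is axiomatized as a unital C*-algebra `E` with isometries `r j` having mutually
orthogonal range projections, `μ₀ : M_d ⊕ ℂ → E` is the canonical embedding (given by the
explicit formula `hμ₀def`), `α` is the quasifree action determined by
`α_g(r_j) = μ₀(ρ(g),1) r_j`, and the equivariance of `φ∘μ₀` is expressed via the action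
`Ad(ρ ⊕ 1)` on `M_d ⊕ ℂ`. -/
theorem stmt13 {G : Type*} [Group G] [TopologicalSpace G] [IsTopologicalGroup G]
    (d : ℕ) (hd : 0 < d)
    {E : Type*} [NormedRing E] [StarRing E] [CStarRing E] [CompleteSpace E]
    [NormedAlgebra ℂ E] [StarModule ℂ E]
    (r : Fin d → E)
    (hiso : ∀ j, star (r j) * r j = 1)
    (horth : ∀ j k, j ≠ k → (r j * star (r j)) * (r k * star (r k)) = 0)
    {C : Type*} [NormedRing C] [StarRing C] [CStarRing C] [CompleteSpace C]
    [NormedAlgebra ℂ C] [StarModule ℂ C]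
    (γ : G → C ≃⋆ₐ[ℂ] C) (hγmul : ∀ g h c, γ (g * h) c = γ g (γ h c))
    (hγcont : ∀ c, Continuous fun g => γ g c)
    (ρ : G → Matrix (Fin d) (Fin d) ℂ)
    (hρU : ∀ g, ρ g ∈ unitary (Matrix (Fin d) (Fin d) ℂ))
    (hρ1 : ρ 1 = 1) (hρmul : ∀ g h, ρ (g * h) = ρ g * ρ h)
    (hρcont : Continuous ρ)
    (μ₀ : Matrix (Fin d) (Fin d) ℂ → ℂ → E)
    (hμ₀def : ∀ x l, μ₀ x l =
      (∑ j, ∑ k, x j k • (r j * star (r k))) + l • (1 - ∑ j, r j * star (r j)))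
    (α : G → E ≃⋆ₐ[ℂ] E) (hαmul : ∀ g h a, α (g * h) a = α g (α h a))
    (hαdef : ∀ g j, α g (r j) = μ₀ (ρ g) 1 * r j)
    (φ : E →⋆ₐ[ℂ] C)
    (hequiv : ∀ g x l, γ g (φ (μ₀ x l)) = φ (μ₀ (ρ g * x * star (ρ g)) l))
    (w : G → C)
    (hwdef : ∀ g, w g = star (φ (α g (r ⟨0, hd⟩))) * γ g (φ (r ⟨0, hd⟩))) :
    (∀ g, w g ∈ unitary C) ∧ Continuous w ∧
      (∀ g j, φ (α g (r j)) * w g = γ g (φ (r j))) ∧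
      (∀ g h, w (g * h) = w g * γ g (w h)) ∧
      (∀ g, ‖w g - 1‖ = ‖φ (α g (r ⟨0, hd⟩)) - γ g (φ (r ⟨0, hd⟩))‖) := by
  -- basic μ₀ facts
  have hmu : ∀ x l, μ₀ x l = Apart r x + l • (1 - ∑ j, r j * star (r j)) := hμ₀def
  have hSS : (∑ j, r j * star (r j)) * (∑ j, r j * star (r j)) = ∑ j, r j * star (r j) := by
    rw [← aux_A_one r, aux_A_mul_A r hiso horth, one_mul]
  have hQQ : ((1:E) - ∑ j, r j * star (r j)) * (1 - ∑ j, r j * star (r j))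
      = 1 - ∑ j, r j * star (r j) := by
    rw [sub_mul, one_mul, mul_sub, mul_one, hSS]
    abel
  have hmul : ∀ (x y : Matrix (Fin d) (Fin d) ℂ) (l m : ℂ),
      μ₀ x l * μ₀ y m = μ₀ (x * y) (l * m) := by
    intro x y l m
    rw [hmu, hmu, hmu]
    rw [add_mul, mul_add, mul_add]
    rw [aux_A_mul_A r hiso horth]
    rw [mul_smul_comm, aux_A_Q r hiso horth, smul_zero]
    rw [smul_mul_assoc, aux_Q_A r hiso horth, smul_zero]
    rw [smul_mul_assoc, mul_smul_comm, smul_smul, hQQ]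
    abel
  have hstarμ : ∀ (x : Matrix (Fin d) (Fin d) ℂ) (l : ℂ),
      star (μ₀ x l) = μ₀ (star x) (star l) := by
    intro x l
    rw [hmu, hmu, star_add, aux_star_A, star_smul]
    congr 2
    rw [star_sub, star_one]
    congr 1
    have : (∑ j, r j * star (r j)) = Apart r (1 : Matrix (Fin d) (Fin d) ℂ) :=
      (aux_A_one r).symm
    rw [this, aux_star_A, star_one]
  have hone : μ₀ 1 1 = 1 := by
    rw [hmu, aux_A_one r, one_smul]
    abel
  have hstd : ∀ j k, μ₀ (Matrix.single j k 1) 0 = r j * star (r k) := by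
    intro j k
    rw [hmu, aux_A_std r, zero_smul, add_zero]
  -- C-side elements
  obtain ⟨u, hu⟩ : ∃ u : G → C, ∀ g, u g = φ (μ₀ (ρ g) 1) := ⟨_, fun _ => rfl⟩
  have hustar : ∀ g, star (u g) = φ (μ₀ (star (ρ g)) 1) := by
    intro g
    rw [hu, ← map_star, hstarμ, star_one]
  have hu1 : ∀ g, star (u g) * u g = 1 := by
    intro g
    rw [hustar, hu, ← map_mul, hmul, (Unitary.mem_iff.mp (hρU g)).1, one_mul, hone, map_one]
  have hu2 : ∀ g, u g * star (u g) = 1 := by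
    intro g
    rw [hustar, hu, ← map_mul, hmul, (Unitary.mem_iff.mp (hρU g)).2, one_mul, hone, map_one]
  have cancel_u : ∀ g (x : C), star (u g) * (u g * x) = x := by
    intro g x; rw [← mul_assoc, hu1, one_mul]
  have cancel_u' : ∀ g (x : C), u g * (star (u g) * x) = x := by
    intro g x; rw [← mul_assoc, hu2, one_mul]
  have hsiso : ∀ j k : Fin d, star (φ (r j)) * φ (r k) = if j = k then (1:C) else 0 := by
    intro j k
    rw [← map_star, ← map_mul, aux_rr r hiso horth]
    split_ifs <;> simp
  have cancel_s : ∀ (j : Fin d) (x : C), star (φ (r j)) * (φ (r j) * x) = x := by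
    intro j x; rw [← mul_assoc, hsiso, if_pos rfl, one_mul]
  have hαφ : ∀ g j, φ (α g (r j)) = u g * φ (r j) := by
    intro g j; rw [hαdef, map_mul, hu]
  have hγss : ∀ g (j k : Fin d), γ g (φ (r j) * star (φ (r k)))
      = u g * ((φ (r j) * star (φ (r k))) * star (u g)) := by
    intro g j k
    have e : φ (r j) * star (φ (r k)) = φ (μ₀ (Matrix.single j k 1) 0) := by
      rw [hstd, map_mul, map_star]
    rw [e, hequiv]
    have e2 : μ₀ (ρ g * Matrix.single j k 1 * star (ρ g)) 0
        = μ₀ (ρ g) 1 * (μ₀ (Matrix.single j k 1) 0 * μ₀ (star (ρ g)) 1) := by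
      rw [hmul, hmul]
      norm_num [mul_assoc]
    rw [e2, map_mul, map_mul, hustar, hu]
  have hγu : ∀ g h, γ g (u h) = u g * (u h * star (u g)) := by
    intro g h
    have e3 : ρ g * ρ h * star (ρ g) = ρ g * (ρ h * star (ρ g)) := mul_assoc _ _ _
    rw [hustar g, hu g, hu h, hequiv, ← map_mul, ← map_mul, hmul, hmul, e3]
    norm_num
  have hγustar : ∀ g h, γ g (star (u h)) = u g * (star (u h) * star (u g)) := by
    intro g h
    rw [map_star, hγu, star_mul, star_mul, star_star, mul_assoc]
  have hw : ∀ g, w g = star (φ (r ⟨0, hd⟩)) * (star (u g) * γ g (φ (r ⟨0, hd⟩))) := by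
    intro g
    rw [hwdef, hαφ, star_mul, mul_assoc]
  have hee : ∀ (g : G) (X : C), γ g (φ (r ⟨0, hd⟩)) * (star (γ g (φ (r ⟨0, hd⟩))) * X)
      = u g * (φ (r ⟨0, hd⟩) * (star (φ (r ⟨0, hd⟩)) * (star (u g) * X))) := by
    intro g X
    have e0 : γ g (φ (r ⟨0, hd⟩)) * star (γ g (φ (r ⟨0, hd⟩)))
        = γ g (φ (r ⟨0, hd⟩) * star (φ (r ⟨0, hd⟩))) := by
      rw [← map_star, ← map_mul]
    rw [← mul_assoc, e0, hγss]
    simp only [mul_assoc]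
  -- part (2)
  have key2 : ∀ g j, φ (α g (r j)) * w g = γ g (φ (r j)) := by
    intro g j
    have e1 : γ g (φ (r j)) = γ g (φ (r j) * star (φ (r ⟨0, hd⟩))) * γ g (φ (r ⟨0, hd⟩)) := by
      rw [← map_mul, mul_assoc, hsiso, if_pos rfl, mul_one]
    rw [hαφ, hw, e1, hγss]
    simp only [mul_assoc]
  -- part (1) : unitary
  have key1 : ∀ g, w g ∈ unitary C := by
    intro g
    rw [Unitary.mem_iff]
    constructor
    · have h1 : star (w g) * w g
          = star (γ g (φ (r ⟨0, hd⟩))) * (γ g (φ (r ⟨0, hd⟩) * star (φ (r ⟨0, hd⟩)))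
            * γ g (φ (r ⟨0, hd⟩))) := by
        rw [hw, hγss]
        simp only [star_mul, star_star, mul_assoc]
      rw [h1, ← map_star, ← map_mul, ← map_mul]
      have : star (φ (r ⟨0, hd⟩)) * (φ (r ⟨0, hd⟩) * star (φ (r ⟨0, hd⟩)) * φ (r ⟨0, hd⟩))
          = 1 := by
        simp only [mul_assoc]
        rw [cancel_s, hsiso, if_pos rfl]
      rw [this, map_one]
    · rw [hw]
      simp only [star_mul, star_star, mul_assoc]
      rw [hee]
      simp only [cancel_u, cancel_u', cancel_s]
      rw [hsiso, if_pos rfl]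
  -- part (3) : cocycle identity
  have key3 : ∀ g h, w (g * h) = w g * γ g (w h) := by
    intro g h
    have humul : u (g * h) = u g * u h := by
      rw [hu, hu, hu, hρmul, ← map_mul, hmul, one_mul]
    have hee : ∀ X : C, γ g (φ (r ⟨0, hd⟩)) * (star (γ g (φ (r ⟨0, hd⟩))) * X)
        = u g * (φ (r ⟨0, hd⟩) * (star (φ (r ⟨0, hd⟩)) * (star (u g) * X))) := by
      intro X
      rw [← mul_assoc, ← map_star (γ g), ← map_mul, hγss]
      simp only [mul_assoc]
    rw [hw (g*h), hw g, hw h, hγmul g h, humul, map_mul, map_mul, map_star (γ g), hγustar]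
    simp only [star_mul, star_star, mul_assoc]
    rw [hee]
    simp only [cancel_u, cancel_u', cancel_s]
  -- part (4) : norm identity
  have key4 : ∀ g, ‖w g - 1‖ = ‖φ (α g (r ⟨0, hd⟩)) - γ g (φ (r ⟨0, hd⟩))‖ := by
    intro g
    have hisoT : ∀ y : C, ‖(u g * φ (r ⟨0, hd⟩)) * y‖ = ‖y‖ := by
      intro y
      have h1 : star ((u g * φ (r ⟨0, hd⟩)) * y) * ((u g * φ (r ⟨0, hd⟩)) * y)
          = star y * y := by
        simp only [star_mul, mul_assoc]
        rw [cancel_u, cancel_s]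
      have h2 := CStarRing.norm_star_mul_self (x := (u g * φ (r ⟨0, hd⟩)) * y)
      have h3 := CStarRing.norm_star_mul_self (x := y)
      rw [h1, h3] at h2
      nlinarith [norm_nonneg ((u g * φ (r ⟨0, hd⟩)) * y), norm_nonneg y]
    have hfix : (u g * φ (r ⟨0, hd⟩)) * (w g - 1)
        = γ g (φ (r ⟨0, hd⟩)) - u g * φ (r ⟨0, hd⟩) := by
      rw [mul_sub, mul_one, ← hαφ, key2 g ⟨0, hd⟩]
    calc ‖w g - 1‖ = ‖(u g * φ (r ⟨0, hd⟩)) * (w g - 1)‖ := (hisoT _).symm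
      _ = ‖γ g (φ (r ⟨0, hd⟩)) - u g * φ (r ⟨0, hd⟩)‖ := by rw [hfix]
      _ = ‖u g * φ (r ⟨0, hd⟩) - γ g (φ (r ⟨0, hd⟩))‖ := norm_sub_rev _ _
      _ = ‖φ (α g (r ⟨0, hd⟩)) - γ g (φ (r ⟨0, hd⟩))‖ := by rw [hαφ]
  -- continuity
  have hu_cont : Continuous u := by
    have e : u = fun g => (∑ j, ∑ k, (ρ g) j k • φ (r j * star (r k)))
        + φ ((1:ℂ) • ((1:E) - ∑ j, r j * star (r j))) := by
      funext g
      rw [hu, hmu, map_add]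
      congr 1
      unfold Apart
      rw [map_sum]
      refine Finset.sum_congr rfl fun j _ => ?_
      rw [map_sum]
      refine Finset.sum_congr rfl fun k _ => ?_
      rw [map_smul]
    rw [e]
    refine Continuous.add ?_ continuous_const
    refine continuous_finset_sum _ fun j _ => continuous_finset_sum _ fun k _ => ?_
    exact (hρcont.matrix_elem j k).smul continuous_const
  have hw_cont : Continuous w := by
    have e : w = fun g => star (φ (r ⟨0, hd⟩)) * (star (u g) * γ g (φ (r ⟨0, hd⟩))) :=
      funext hw
    rw [e]
    exact continuous_const.mul ((hu_cont.star).mul (hγcont _))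
  exact ⟨key1, hw_cont, key2, key3, key4⟩
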